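/- For j ≠ k, the partial derivative of β_n'(λ_k) (the derivative of the truncation polynomial β_n(λ) evaluated at the root λ_k) with respect to λ_j satisfies ∂(β_n'(λ_k))/∂λ_j = (1/(λ_j - λ_k)) · (∂(β_n(λ_k))/∂λ_j + β_n'(λ_k)); for j = k, ∂(β_n'(λ_k))/∂λ_k = (1/2) β_n''(λ_k). -/

import Mathlib

open Polynomial

/-- `β(λ) = ∏_{j} (λ - λ_j)` with the roots `λ_j` indeterminates. -/
noncomputable def betaP (F : Type*) [Field F] (g : ℕ) :
    Polynomial (MvPolynomial (Fin g) F) :=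
  ∏ l : Fin g, (Polynomial.X - Polynomial.C (MvPolynomial.X l))

/-- The truncation `β_n(λ) = λ^n + β_1 λ^{n-1} + ⋯ + β_n`. -/
noncomputable def betaTrunc (F : Type*) [Field F] (g n : ℕ) :
    Polynomial (MvPolynomial (Fin g) F) :=
  ∑ m ∈ Finset.range (n + 1),
    Polynomial.C ((betaP F g).coeff (g - m)) * Polynomial.X ^ (n - m)

namespace BetaAux

variable {F : Type*} [Field F] {g : ℕ}

/-- coefficientwise partial derivative on polynomials over `MvPolynomial`. -/
noncomputable def dmap (j : Fin g) (p : Polynomial (MvPolynomial (Fin g) F)) :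
    Polynomial (MvPolynomial (Fin g) F) :=
  ⟨Finsupp.mapRange (⇑(MvPolynomial.pderiv j)) (map_zero _) p.toFinsupp.coeff |> AddMonoidAlgebra.ofCoeff⟩

@[simp] lemma dmap_coeff (j : Fin g) (p : Polynomial (MvPolynomial (Fin g) F)) (i : ℕ) :
    (dmap j p).coeff i = MvPolynomial.pderiv j (p.coeff i) := by
  rcases p with ⟨f⟩
  simp [dmap, Polynomial.coeff_ofFinsupp, Polynomial.coeff]

lemma dmap_C (j : Fin g) (a : MvPolynomial (Fin g) F) :
    dmap j (C a) = C (MvPolynomial.pderiv j a) := by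
  ext i
  simp only [dmap_coeff, coeff_C]
  rw [apply_ite (MvPolynomial.pderiv j)]
  simp

lemma dmap_X (j : Fin g) : dmap j (X : Polynomial (MvPolynomial (Fin g) F)) = 0 := by
  ext i
  simp only [dmap_coeff, coeff_X, coeff_zero]
  rw [apply_ite (MvPolynomial.pderiv j)]
  simp [MvPolynomial.pderiv_one]

lemma dmap_one (j : Fin g) : dmap j (1 : Polynomial (MvPolynomial (Fin g) F)) = 0 := by
  have h : (1 : Polynomial (MvPolynomial (Fin g) F)) = C 1 := by simp
  rw [h, dmap_C]; simp

lemma dmap_mul (j : Fin g) (p q : Polynomial (MvPolynomial (Fin g) F)) :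
    dmap j (p * q) = dmap j p * q + p * dmap j q := by
  ext i
  simp only [dmap_coeff, coeff_mul, coeff_add, map_sum, MvPolynomial.pderiv_mul]
  rw [Finset.sum_add_distrib]

lemma dmap_derivative (j : Fin g) (p : Polynomial (MvPolynomial (Fin g) F)) :
    dmap j (derivative p) = derivative (dmap j p) := by
  ext i
  simp only [dmap_coeff, coeff_derivative]
  have h : p.coeff (i + 1) * ((i : MvPolynomial (Fin g) F) + 1)
      = (i + 1) • p.coeff (i + 1) := by
    rw [nsmul_eq_mul, mul_comm]; push_cast; ring
  rw [h, map_nsmul]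
  rw [nsmul_eq_mul, mul_comm]; push_cast; ring

/-- chain rule for evaluation. -/
lemma pderiv_eval (j : Fin g) (p : Polynomial (MvPolynomial (Fin g) F))
    (x : MvPolynomial (Fin g) F) :
    MvPolynomial.pderiv j (p.eval x)
      = (dmap j p).eval x + (derivative p).eval x * MvPolynomial.pderiv j x := by
  induction p using Polynomial.induction_on' with
  | add p q hp hq =>
      have hd : dmap j (p + q) = dmap j p + dmap j q := by ext i; simp
      simp [hd, hp, hq]; ring
  | monomial n a =>
      have hd : dmap j (monomial n a) = monomial n (MvPolynomial.pderiv j a) := by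
        ext i
        simp only [dmap_coeff, coeff_monomial]
        rw [apply_ite (MvPolynomial.pderiv j)]
        simp
      rw [hd, eval_monomial, MvPolynomial.pderiv_mul, derivative_monomial, eval_monomial,
        eval_monomial, Derivation.leibniz_pow]
      rw [smul_eq_mul, nsmul_eq_mul]
      ring

lemma dmap_prod_eq_zero (j : Fin g) (s : Finset (Fin g)) (hj : j ∉ s) :
    dmap j (∏ l ∈ s, (X - C (MvPolynomial.X l)
      : Polynomial (MvPolynomial (Fin g) F))) = 0 := by
  induction s using Finset.induction_on with
  | empty => simpa using dmap_one (F := F) j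
  | @insert a s ha ih =>
      rw [Finset.prod_insert ha, dmap_mul, ih (fun h => hj (Finset.mem_insert_of_mem h))]
      have h1 : dmap j ((X - C (MvPolynomial.X a)
          : Polynomial (MvPolynomial (Fin g) F))) = 0 := by
        have hsub : (X - C (MvPolynomial.X a) : Polynomial (MvPolynomial (Fin g) F))
            = X + C (- MvPolynomial.X a) := by rw [map_neg, sub_eq_add_neg]
        rw [hsub]
        have : dmap j (X + C (- MvPolynomial.X a)
            : Polynomial (MvPolynomial (Fin g) F)) = dmap j X + dmap j (C (- MvPolynomial.X a)) := by
          ext i; simp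
        rw [this, dmap_X, dmap_C]
        have : MvPolynomial.pderiv j (- MvPolynomial.X a : MvPolynomial (Fin g) F) = 0 := by
          rw [map_neg, MvPolynomial.pderiv_X_of_ne (fun h => hj (by rw [← h]; exact Finset.mem_insert_self a s))]
          simp
        simp [this]
      rw [h1]
      ring

lemma natDegree_betaP : (betaP F g).natDegree = g := by
  rw [betaP, Polynomial.natDegree_prod]
  · simp
  · intro l _; exact X_sub_C_ne_zero _

lemma coeff_divX_iterate (p : Polynomial (MvPolynomial (Fin g) F)) (e i : ℕ) :
    ((Polynomial.divX)^[e] p).coeff i = p.coeff (i + e) := by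
  induction e generalizing p with
  | zero => simp
  | succ e ih =>
      rw [Function.iterate_succ_apply, ih, coeff_divX]
      ring_nf

lemma divX_iter_X_sub_C_mul (c : MvPolynomial (Fin g) F)
    (Q : Polynomial (MvPolynomial (Fin g) F)) (e : ℕ) :
    (Polynomial.divX)^[e] ((X - C c) * Q)
      = (X - C c) * (Polynomial.divX)^[e] Q + C ((X * Q).coeff e) := by
  apply Polynomial.ext
  intro i
  rw [coeff_divX_iterate]
  simp only [sub_mul, coeff_add, coeff_sub, coeff_C_mul, coeff_C, coeff_divX_iterate]
  cases i with
  | zero =>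
      simp only [mul_coeff_zero, coeff_X_zero, zero_mul, if_true]
      ring
  | succ i =>
      rw [show i + 1 + e = (i + e) + 1 from by ring, coeff_X_mul, coeff_X_mul,
        coeff_divX_iterate]
      simp

lemma betaTrunc_eq_divX (n : ℕ) (hng : n ≤ g) :
    betaTrunc F g n = (Polynomial.divX)^[g - n] (betaP F g) := by
  apply Polynomial.ext
  intro i
  rw [coeff_divX_iterate, betaTrunc, Polynomial.finset_sum_coeff]
  simp only [coeff_C_mul, coeff_X_pow, mul_ite, mul_one, mul_zero]
  by_cases hi : i ≤ n
  · rw [Finset.sum_eq_single (n - i)]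
    · rw [if_pos (by omega)]
      congr 1
      omega
    · intro m hm hmne
      rw [Finset.mem_range] at hm
      rw [if_neg (by omega)]
    · intro h
      exact absurd (Finset.mem_range.mpr (by omega)) h
  · rw [Finset.sum_eq_zero, eq_comm]
    · apply Polynomial.coeff_eq_zero_of_natDegree_lt
      rw [natDegree_betaP]
      omega
    · intro m hm
      rw [Finset.mem_range] at hm
      rw [if_neg (by omega)]

/-- The key structural decomposition of the truncation. -/
lemma decomp (n : ℕ) (hng : n ≤ g) (j : Fin g) :
    ∃ (S : Polynomial (MvPolynomial (Fin g) F)) (r : MvPolynomial (Fin g) F),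
      betaTrunc F g n = (X - C (MvPolynomial.X j)) * S + C r ∧
      dmap j S = 0 ∧ dmap j (derivative S) = 0 ∧ MvPolynomial.pderiv j r = 0 := by
  set Q : Polynomial (MvPolynomial (Fin g) F) :=
    ∏ l ∈ Finset.univ.erase j, (X - C (MvPolynomial.X l)) with hQ
  have hfact : betaP F g = (X - C (MvPolynomial.X j)) * Q := by
    rw [betaP, hQ]
    exact (Finset.mul_prod_erase _ _ (Finset.mem_univ j)).symm
  have hdQ : dmap j Q = 0 := dmap_prod_eq_zero j _ (Finset.notMem_erase j _)
  refine ⟨(Polynomial.divX)^[g - n] Q, (X * Q).coeff (g - n), ?_, ?_, ?_, ?_⟩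
  · rw [betaTrunc_eq_divX n hng, hfact, divX_iter_X_sub_C_mul]
  · apply Polynomial.ext
    intro i
    rw [dmap_coeff, coeff_divX_iterate, coeff_zero, ← dmap_coeff, hdQ, coeff_zero]
  · have hS : dmap j ((Polynomial.divX)^[g - n] Q) = 0 := by
      apply Polynomial.ext
      intro i
      rw [dmap_coeff, coeff_divX_iterate, coeff_zero, ← dmap_coeff, hdQ, coeff_zero]
    rw [dmap_derivative, hS]
    simp
  · have hXQ : dmap j (X * Q) = 0 := by
      rw [dmap_mul, dmap_X, hdQ]
      simp
    rw [← dmap_coeff, hXQ, coeff_zero]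

end BetaAux

open BetaAux in
set_option synthInstance.maxHeartbeats 1000000 in
theorem pderiv_of_deriv_trunc_at_root (F : Type*) [Field F] [CharZero F] (g n : ℕ)
    (hn1 : 1 ≤ n) (hng : n ≤ g) (j k : Fin g) :
    (j ≠ k →
      (algebraMap (MvPolynomial (Fin g) F) (FractionRing (MvPolynomial (Fin g) F)))
          (MvPolynomial.pderiv j
            ((Polynomial.derivative (betaTrunc F g n)).eval (MvPolynomial.X k))) =
        ((algebraMap (MvPolynomial (Fin g) F) (FractionRing (MvPolynomial (Fin g) F)))
              (MvPolynomial.X j) -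
            (algebraMap (MvPolynomial (Fin g) F) (FractionRing (MvPolynomial (Fin g) F)))
              (MvPolynomial.X k))⁻¹ *
          ((algebraMap (MvPolynomial (Fin g) F) (FractionRing (MvPolynomial (Fin g) F)))
              (MvPolynomial.pderiv j ((betaTrunc F g n).eval (MvPolynomial.X k))) +
            (algebraMap (MvPolynomial (Fin g) F) (FractionRing (MvPolynomial (Fin g) F)))
              ((Polynomial.derivative (betaTrunc F g n)).eval (MvPolynomial.X k)))) ∧
    MvPolynomial.pderiv k
        ((Polynomial.derivative (betaTrunc F g n)).eval (MvPolynomial.X k)) =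
      MvPolynomial.C ((1 : F) / 2) *
        (Polynomial.derivative (Polynomial.derivative (betaTrunc F g n))).eval
          (MvPolynomial.X k) := by
  constructor
  · -- case j ≠ k
    intro hjk
    obtain ⟨S, r, hA, hdS, hdS', hr⟩ := decomp (F := F) n hng j
    have hD : derivative (betaTrunc F g n)
        = S + (X - C (MvPolynomial.X j)) * derivative S := by
      rw [hA]
      simp only [derivative_add, derivative_mul, derivative_sub, derivative_X, derivative_C]
      ring
    have hXk : MvPolynomial.pderiv j (MvPolynomial.X k : MvPolynomial (Fin g) F) = 0 :=
      MvPolynomial.pderiv_X_of_ne (Ne.symm hjk)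
    have hp1 : MvPolynomial.pderiv j ((betaTrunc F g n).eval (MvPolynomial.X k))
        = - S.eval (MvPolynomial.X k) := by
      rw [hA]
      simp only [eval_add, eval_mul, eval_sub, eval_X, eval_C, map_add]
      rw [hr, MvPolynomial.pderiv_mul, map_sub, hXk, pderiv_eval, hdS, hXk,
        MvPolynomial.pderiv_X_self]
      simp
    have hp2 : MvPolynomial.pderiv j
        ((derivative (betaTrunc F g n)).eval (MvPolynomial.X k))
        = - (derivative S).eval (MvPolynomial.X k) := by
      rw [hD]
      simp only [eval_add, eval_mul, eval_sub, eval_X, eval_C, map_add]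
      rw [pderiv_eval, hdS, hXk, MvPolynomial.pderiv_mul, map_sub, hXk,
        MvPolynomial.pderiv_X_self, pderiv_eval, hdS', hXk]
      simp
    have hEv2 : (derivative (betaTrunc F g n)).eval (MvPolynomial.X k)
        = S.eval (MvPolynomial.X k)
          + (MvPolynomial.X k - MvPolynomial.X j) * (derivative S).eval (MvPolynomial.X k) := by
      rw [hD]; simp
    rw [hp1, hp2, hEv2]
    have hu : (algebraMap (MvPolynomial (Fin g) F) (FractionRing (MvPolynomial (Fin g) F)))
        (MvPolynomial.X j)
        - (algebraMap (MvPolynomial (Fin g) F) (FractionRing (MvPolynomial (Fin g) F)))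
        (MvPolynomial.X k) ≠ 0 := by
      rw [sub_ne_zero]
      intro h
      exact hjk (MvPolynomial.X_injective (IsFractionRing.injective
        (MvPolynomial (Fin g) F) (FractionRing (MvPolynomial (Fin g) F)) h))
    simp only [map_neg, map_add, map_mul, map_sub]
    field_simp
    ring
  · -- case j = k
    obtain ⟨S, r, hA, hdS, hdS', hr⟩ := decomp (F := F) n hng k
    have hD : derivative (betaTrunc F g n)
        = S + (X - C (MvPolynomial.X k)) * derivative S := by
      rw [hA]
      simp only [derivative_add, derivative_mul, derivative_sub, derivative_X, derivative_C]
      ring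
    have hD2 : derivative (derivative (betaTrunc F g n))
        = derivative S + derivative S
          + (X - C (MvPolynomial.X k)) * derivative (derivative S) := by
      rw [hD]
      simp only [derivative_add, derivative_mul, derivative_sub, derivative_X, derivative_C]
      ring
    have hL : MvPolynomial.pderiv k
        ((derivative (betaTrunc F g n)).eval (MvPolynomial.X k))
        = (derivative S).eval (MvPolynomial.X k) := by
      rw [hD]
      simp only [eval_add, eval_mul, eval_sub, eval_X, eval_C, sub_self, zero_mul, add_zero]
      rw [pderiv_eval, hdS, MvPolynomial.pderiv_X_self]
      simp
    have hR : (derivative (derivative (betaTrunc F g n))).eval (MvPolynomial.X k)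
        = (derivative S).eval (MvPolynomial.X k) + (derivative S).eval (MvPolynomial.X k) := by
      rw [hD2]
      simp only [eval_add, eval_mul, eval_sub, eval_X, eval_C, sub_self, zero_mul, add_zero]
    rw [hL, hR]
    have h2 : (MvPolynomial.C ((1 : F) / 2) : MvPolynomial (Fin g) F) * 2 = 1 := by
      rw [show (2 : MvPolynomial (Fin g) F) = MvPolynomial.C (2 : F) from
        (map_ofNat MvPolynomial.C 2).symm, ← map_mul]
      norm_num
    calc (derivative S).eval (MvPolynomial.X k)
        = (MvPolynomial.C ((1 : F) / 2) * 2) * (derivative S).eval (MvPolynomial.X k) := by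
          rw [h2, one_mul]
      _ = MvPolynomial.C ((1 : F) / 2) *
          ((derivative S).eval (MvPolynomial.X k) + (derivative S).eval (MvPolynomial.X k)) := by
          ring
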